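/- (Lemma 4, extraction direction.) Let M be any perfect matching of the constructed graph G, and let L' = {(a_i,b_j) : M contains a main edge joining a vertex of A_i ∪ A'_i to the vertex b_{ji}}. Then L' is an MMDC between A and B and c(L') = Weight(Main(M)). -/

import Mathlib

open Finset

section Construction

variable {s t : ℕ}

/-- The left part `S` of the constructed complete bipartite graph `G`:
`A_i` (`α i` copies of `a_i`), `A'_i` (`α' i − α i` copies of `a_i`),
the dummy sets `X_j` (`β' j − β j` vertices) and `W_j` (`s − β' j` vertices). -/
abbrev LeftV (s t : ℕ) (α α' : Fin s → ℕ) (β β' : Fin t → ℕ) : Type :=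
  ((Σ i : Fin s, Fin (α i)) ⊕ (Σ i : Fin s, Fin (α' i - α i))) ⊕
  ((Σ j : Fin t, Fin (β' j - β j)) ⊕ (Σ j : Fin t, Fin (s - β' j)))

/-- The right part `T` of the constructed graph: the sets `Bset_i` (vertex `(i, j)`
is the copy `b_{ji}` of `b_j` lying in `Bset_i`; thus `B_j = {(i, j) : i}`) together
with the compensator set `Y` of `Σ_i α'_i − Σ_j β_j` dummy vertices. -/
abbrev RightV (s t : ℕ) (α' : Fin s → ℕ) (β : Fin t → ℕ) : Type :=
  (Fin s × Fin t) ⊕ Fin (∑ i, α' i - ∑ j, β j)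

variable {α α' : Fin s → ℕ} {β β' : Fin t → ℕ}

/-- Adjacency in the constructed graph `G`: each vertex of `A_i ∪ A'_i` is joined to every
vertex of `Bset_i`; each vertex of `A'_i` is joined to every vertex of `Y`; each vertex of
`X_j` is joined to every vertex of `B_j` and to every vertex of `Y`; each vertex of `W_j`
is joined to every vertex of `B_j`. -/
def Adj : LeftV s t α α' β β' → RightV s t α' β → Prop
  | .inl (.inl ⟨i, _⟩), .inl (i', _) => i' = i       -- A_i — Bset_i
  | .inl (.inl _), .inr _ => False
  | .inl (.inr ⟨i, _⟩), .inl (i', _) => i' = i       -- A'_i — Bset_i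
  | .inl (.inr _), .inr _ => True                     -- A'_i — Y
  | .inr (.inl ⟨j, _⟩), .inl (_, j') => j' = j       -- X_j — B_j
  | .inr (.inl _), .inr _ => True                     -- X_j — Y
  | .inr (.inr ⟨j, _⟩), .inl (_, j') => j' = j       -- W_j — B_j
  | .inr (.inr _), .inr _ => False

/-- Edge weights of the constructed graph `G`. -/
def wt (δ : Fin s → Fin t → ℝ) (γ' γ'' : ℝ) : LeftV s t α α' β β' → RightV s t α' β → ℝ
  | .inl _, .inl (i, j) => δ i j     -- main edges into b_{ji}
  | .inl (.inl _), .inr _ => 0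
  | .inl (.inr _), .inr _ => γ'      -- A'_i — Y
  | .inr (.inl _), .inl _ => γ'      -- X_j — B_j
  | .inr (.inl _), .inr _ => γ''     -- X_j — Y
  | .inr (.inr _), _ => 0            -- W_j — B_j

/-- An edge is a main edge when it joins `⋃_i (A_i ∪ A'_i)` to `⋃_i Bset_i`. -/
def IsMainEdge : LeftV s t α α' β β' → RightV s t α' β → Bool
  | .inl _, .inl _ => true
  | _, _ => false

/-- A perfect matching of `G` is a bijection between the two parts all of whose
pairs are edges of `G`. -/
def IsPM (M : LeftV s t α α' β β' ≃ RightV s t α' β) : Prop :=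
  ∀ v, Adj v (M v)

/-- `Weight(M)`, the total weight of a perfect matching. -/
noncomputable def totalWeight (δ : Fin s → Fin t → ℝ) (γ' γ'' : ℝ)
    (M : LeftV s t α α' β β' ≃ RightV s t α' β) : ℝ :=
  ∑ v, wt δ γ' γ'' v (M v)

/-- `Weight(Main(M))`, the total weight of the main edges of `M`. -/
noncomputable def mainWeight (δ : Fin s → Fin t → ℝ) (γ' γ'' : ℝ)
    (M : LeftV s t α α' β β' ≃ RightV s t α' β) : ℝ :=
  ∑ v ∈ univ.filter (fun v => IsMainEdge v (M v)), wt δ γ' γ'' v (M v)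

/-- `|Main(M)|`, the number of main edges of `M`. -/
def mainCount (M : LeftV s t α α' β β' ≃ RightV s t α' β) : ℕ :=
  (univ.filter (fun v => IsMainEdge v (M v))).card

/-- `L ⊆ A × B` is an MMDC between `A` and `B`: each `a_i` lies in at least `α i` and at
most `α' i` pairs, and each `b_j` lies in at least `β j` and at most `β' j` pairs. -/
def IsMMDC (α α' : Fin s → ℕ) (β β' : Fin t → ℕ) (L : Finset (Fin s × Fin t)) : Prop :=
  (∀ i, α i ≤ (L.filter (fun p => p.1 = i)).card ∧
    (L.filter (fun p => p.1 = i)).card ≤ α' i) ∧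
  (∀ j, β j ≤ (L.filter (fun p => p.2 = j)).card ∧
    (L.filter (fun p => p.2 = j)).card ≤ β' j)

/-- `c(L)`, the cost of a matching `L` between `A` and `B`. -/
noncomputable def cost (δ : Fin s → Fin t → ℝ) (L : Finset (Fin s × Fin t)) : ℝ :=
  ∑ p ∈ L, δ p.1 p.2

end Construction

/-- **Lemma 4, extraction direction.** Let `M` be any perfect matching of
the constructed graph `G`, and let `L'` consist of the pairs `(a_i, b_j)` such that `M`
contains a main edge joining a vertex of `A_i ∪ A'_i` to the vertex `b_{ji}` (i.e. the
partner of `b_{ji} = (i, j)` under `M` lies in the left blocks `A_i ∪ A'_i`).  Then `L'`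
is an MMDC between `A` and `B` and `c(L') = Weight(Main(M))`. -/
theorem mmdc_of_pm {s t : ℕ} (α α' : Fin s → ℕ) (β β' : Fin t → ℕ)
    (δ : Fin s → Fin t → ℝ) (γ' γ'' : ℝ)
    (hs : 1 ≤ s) (ht : 1 ≤ t)
    (hδ0 : ∀ i j, 0 ≤ δ i j)
    (hα1 : ∀ i, 1 ≤ α i) (hαα : ∀ i, α i ≤ α' i) (hα't : ∀ i, α' i ≤ t)
    (hβ1 : ∀ j, 1 ≤ β j) (hββ : ∀ j, β j ≤ β' j) (hβ's : ∀ j, β' j ≤ s)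
    (hsum : ∑ j, β j ≤ ∑ i, α' i)
    (hγ' : ∀ i j, δ i j < γ') (hγ'' : γ' < γ'')
    (M : LeftV s t α α' β β' ≃ RightV s t α' β) (hM : IsPM M)
    (L' : Finset (Fin s × Fin t))
    (hL' : L' = univ.filter (fun p : Fin s × Fin t => (M.symm (Sum.inl p)).isLeft)) :
    IsMMDC α α' β β' L' ∧ cost δ L' = mainWeight δ γ' γ'' M := by
  subst hL'
  set L' := univ.filter (fun p : Fin s × Fin t => (M.symm (Sum.inl p)).isLeft) with hL'
  have hmem : ∀ p : Fin s × Fin t, p ∈ L' ↔ (M.symm (Sum.inl p)).isLeft := by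
    intro p; simp [hL']
  constructor
  · constructor
    · intro i
      constructor
      · -- α i ≤ card
        have hex : ∀ k : Fin (α i), ∃ j : Fin t,
            M (Sum.inl (Sum.inl ⟨i, k⟩)) = Sum.inl (i, j) := by
          intro k
          have h := hM (Sum.inl (Sum.inl ⟨i, k⟩))
          rcases hMk : M (Sum.inl (Sum.inl ⟨i, k⟩)) with q | y
          · rw [hMk] at h
            obtain ⟨i', j⟩ := q
            have hii : i' = i := h
            exact ⟨j, by rw [hii]⟩
          · rw [hMk] at h; exact h.elim
        choose jf hjf using hex
        have hle : (univ : Finset (Fin (α i))).card ≤ (L'.filter fun p => p.1 = i).card := by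
          apply Finset.card_le_card_of_injOn (fun k => ((i, jf k) : Fin s × Fin t))
          · intro k _
            simp only [Finset.mem_coe, Finset.mem_filter]
            refine ⟨?_, by trivial⟩
            rw [hmem]
            have hv : M.symm (Sum.inl (i, jf k)) = Sum.inl (Sum.inl ⟨i, k⟩) := by
              rw [← hjf k, Equiv.symm_apply_apply]
            rw [hv]; rfl
          · intro k1 _ k2 _ hk
            simp only [Prod.mk.injEq] at hk
            have hMeq : M (Sum.inl (Sum.inl ⟨i, k1⟩)) = M (Sum.inl (Sum.inl ⟨i, k2⟩)) := by
              rw [hjf, hjf, hk.2]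
            have := M.injective hMeq
            simpa using this
        simpa using hle
      · -- card ≤ α' i
        have hinj1 : Function.Injective
            (fun k : Fin (α i) => (Sum.inl (Sum.inl ⟨i, k⟩) : LeftV s t α α' β β')) := by
          intro a b h; simpa using h
        have hinj2 : Function.Injective
            (fun k : Fin (α' i - α i) => (Sum.inl (Sum.inr ⟨i, k⟩) : LeftV s t α α' β β')) := by
          intro a b h; simpa using h
        set T : Finset (LeftV s t α α' β β') :=
          (univ.image fun k : Fin (α i) => Sum.inl (Sum.inl ⟨i, k⟩)) ∪
          (univ.image fun k : Fin (α' i - α i) => Sum.inl (Sum.inr ⟨i, k⟩)) with hT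
        have hdisj : Disjoint
            (univ.image fun k : Fin (α i) => (Sum.inl (Sum.inl ⟨i, k⟩) : LeftV s t α α' β β'))
            (univ.image fun k : Fin (α' i - α i) => Sum.inl (Sum.inr ⟨i, k⟩)) := by
          simp only [Finset.disjoint_left, Finset.mem_image, Finset.mem_univ, true_and,
            not_exists]
          rintro a ⟨k, rfl⟩ k' h
          simp at h
        have hTcard : T.card = α' i := by
          rw [hT, Finset.card_union_of_disjoint hdisj,
            Finset.card_image_of_injective _ hinj1, Finset.card_image_of_injective _ hinj2,
            Finset.card_univ, Finset.card_univ, Fintype.card_fin, Fintype.card_fin]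
          have := hαα i; omega
        have hle : (L'.filter fun p => p.1 = i).card ≤ T.card := by
          apply Finset.card_le_card_of_injOn (fun p => M.symm (Sum.inl p))
          · rintro ⟨p1, p2⟩ hp
            simp only [Finset.mem_coe, Finset.mem_filter] at hp
            obtain ⟨hp1, hp2⟩ := hp
            rw [hmem] at hp1
            rcases hv : M.symm (Sum.inl (p1, p2)) with x | y
            · have hadj := hM (M.symm (Sum.inl (p1, p2)))
              rw [Equiv.apply_symm_apply, hv] at hadj
              rcases x with ⟨i', k⟩ | ⟨i', k⟩
              · have hpi : p1 = i' := hadj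
                have hii : i' = i := by rw [← hpi]; exact hp2
                subst hii
                rw [hT]
                simp only [Finset.mem_coe, Finset.mem_union, Finset.mem_image, Finset.mem_univ, true_and]
                exact Or.inl ⟨k, hv.symm⟩
              · have hpi : p1 = i' := hadj
                have hii : i' = i := by rw [← hpi]; exact hp2
                subst hii
                rw [hT]
                simp only [Finset.mem_coe, Finset.mem_union, Finset.mem_image, Finset.mem_univ, true_and]
                exact Or.inr ⟨k, hv.symm⟩
            · rw [hv] at hp1; simp at hp1
          · intro p1 _ p2 _ h
            have := M.symm.injective h
            simpa using this
        rw [hTcard] at hle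
        exact hle
    · intro j
      have hinjpair : Function.Injective (fun i : Fin s => ((i, j) : Fin s × Fin t)) := by
        intro a b h; simpa using h
      have hbij : (L'.filter fun p => p.2 = j) =
          (univ.filter fun i : Fin s => (M.symm (Sum.inl (i, j))).isLeft).image
            (fun i => (i, j)) := by
        ext ⟨p1, p2⟩
        simp only [Finset.mem_filter, Finset.mem_image, Finset.mem_univ, true_and,
          Prod.mk.injEq]
        constructor
        · rintro ⟨h1, rfl⟩
          rw [hmem] at h1
          exact ⟨p1, h1, rfl, rfl⟩
        · rintro ⟨i, hi, rfl, rfl⟩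
          rw [hmem]
          exact ⟨hi, rfl⟩
      have hcards : (L'.filter fun p => p.2 = j).card =
          (univ.filter fun i : Fin s => (M.symm (Sum.inl (i, j))).isLeft).card := by
        rw [hbij, Finset.card_image_of_injective _ hinjpair]
      set Fj := univ.filter fun i : Fin s => ¬(M.symm (Sum.inl (i, j))).isLeft with hFj
      have hcompl : (univ.filter fun i : Fin s => (M.symm (Sum.inl (i, j))).isLeft).card +
          Fj.card = s := by
        rw [hFj, Finset.card_filter_add_card_filter_not]
        simp
      -- upper bound on Fj.card
      have hinj1 : Function.Injective
          (fun k : Fin (β' j - β j) => (Sum.inr (Sum.inl ⟨j, k⟩) : LeftV s t α α' β β')) := by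
        intro a b h; simpa using h
      have hinj2 : Function.Injective
          (fun k : Fin (s - β' j) => (Sum.inr (Sum.inr ⟨j, k⟩) : LeftV s t α α' β β')) := by
        intro a b h; simpa using h
      set U : Finset (LeftV s t α α' β β') :=
        (univ.image fun k : Fin (β' j - β j) => Sum.inr (Sum.inl ⟨j, k⟩)) ∪
        (univ.image fun k : Fin (s - β' j) => Sum.inr (Sum.inr ⟨j, k⟩)) with hU
      have hdisj : Disjoint
          (univ.image fun k : Fin (β' j - β j) => (Sum.inr (Sum.inl ⟨j, k⟩) : LeftV s t α α' β β'))
          (univ.image fun k : Fin (s - β' j) => Sum.inr (Sum.inr ⟨j, k⟩)) := by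
        simp only [Finset.disjoint_left, Finset.mem_image, Finset.mem_univ, true_and,
          not_exists]
        rintro a ⟨k, rfl⟩ k' h
        simp at h
      have hUcard : U.card = (β' j - β j) + (s - β' j) := by
        rw [hU, Finset.card_union_of_disjoint hdisj,
          Finset.card_image_of_injective _ hinj1, Finset.card_image_of_injective _ hinj2,
          Finset.card_univ, Finset.card_univ, Fintype.card_fin, Fintype.card_fin]
      have hFle : Fj.card ≤ (β' j - β j) + (s - β' j) := by
        rw [← hUcard]
        apply Finset.card_le_card_of_injOn (fun i => M.symm (Sum.inl (i, j)))
        · intro i hi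
          rw [hFj] at hi
          simp only [Finset.mem_coe, Finset.mem_filter, Finset.mem_univ, true_and] at hi
          rcases hv : M.symm (Sum.inl (i, j)) with x | y
          · rw [hv] at hi; simp at hi
          · have hadj := hM (M.symm (Sum.inl (i, j)))
            rw [Equiv.apply_symm_apply, hv] at hadj
            rcases y with ⟨j', k⟩ | ⟨j', k⟩
            · have hjj : j = j' := hadj
              subst hjj
              rw [hU]
              simp only [Finset.mem_coe, Finset.mem_union, Finset.mem_image, Finset.mem_univ, true_and]
              exact Or.inl ⟨k, hv.symm⟩
            · have hjj : j = j' := hadj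
              subst hjj
              rw [hU]
              simp only [Finset.mem_coe, Finset.mem_union, Finset.mem_image, Finset.mem_univ, true_and]
              exact Or.inr ⟨k, hv.symm⟩
        · intro a _ b _ h
          have := M.symm.injective h
          simpa using this
      -- lower bound on Fj.card
      have hex : ∀ k : Fin (s - β' j), ∃ i : Fin s,
          M (Sum.inr (Sum.inr ⟨j, k⟩)) = Sum.inl (i, j) := by
        intro k
        have h := hM (Sum.inr (Sum.inr ⟨j, k⟩))
        rcases hMk : M (Sum.inr (Sum.inr ⟨j, k⟩)) with q | y
        · rw [hMk] at h
          obtain ⟨i, j'⟩ := q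
          have hjj : j' = j := h
          exact ⟨i, by rw [hjj]⟩
        · rw [hMk] at h; exact h.elim
      choose ifn hifn using hex
      have hFge : s - β' j ≤ Fj.card := by
        have hle : (univ : Finset (Fin (s - β' j))).card ≤ Fj.card := by
          apply Finset.card_le_card_of_injOn (fun k => ifn k)
          · intro k _
            rw [hFj]
            simp only [Finset.mem_coe, Finset.mem_filter, Finset.mem_univ, true_and]
            have hv : M.symm (Sum.inl (ifn k, j)) = Sum.inr (Sum.inr ⟨j, k⟩) := by
              rw [← hifn k, Equiv.symm_apply_apply]
            rw [hv]; simp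
          · intro k1 _ k2 _ hk
            have hMeq : M (Sum.inr (Sum.inr ⟨j, k1⟩)) = M (Sum.inr (Sum.inr ⟨j, k2⟩)) := by
              rw [hifn, hifn]
              simp only at hk
              rw [hk]
            have := M.injective hMeq
            simpa using this
        simpa using hle
      have h1 := hββ j
      have h2 := hβ's j
      constructor
      · rw [hcards]; omega
      · rw [hcards]; omega
  · -- cost equality
    unfold cost mainWeight
    refine Finset.sum_bij (fun p _ => M.symm (Sum.inl p)) ?_ ?_ ?_ ?_
    · intro p hp
      rw [hmem] at hp
      simp only [Finset.mem_filter, Finset.mem_univ, true_and]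
      rcases hv : M.symm (Sum.inl p) with x | y
      · have hMx : M (Sum.inl x) = Sum.inl p := by
          rw [← hv, Equiv.apply_symm_apply]
        rw [hMx]
        rfl
      · rw [hv] at hp; simp at hp
    · intro p1 _ p2 _ h
      have := M.symm.injective h
      simpa using this
    · rintro (x | y) hv
      · rcases hq : M (Sum.inl x) with q | z
        · have hsymm : M.symm (Sum.inl q) = Sum.inl x := M.symm_apply_eq.mpr hq.symm
          refine ⟨q, ?_, hsymm⟩
          rw [hmem, hsymm]
          rfl
        · simp only [Finset.mem_filter, Finset.mem_univ, true_and] at hv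
          rw [hq] at hv
          simp [IsMainEdge] at hv
      · simp only [Finset.mem_filter, Finset.mem_univ, true_and] at hv
        simp [IsMainEdge] at hv
    · rintro ⟨p1, p2⟩ hp
      rw [hmem] at hp
      rcases hv : M.symm (Sum.inl (p1, p2)) with x | y
      · have hMx : M (Sum.inl x) = Sum.inl (p1, p2) := by
          rw [← hv, Equiv.apply_symm_apply]
        simp only [hv, hMx]
        rcases x with ⟨i, k⟩ | ⟨i, k⟩ <;> rfl
      · rw [hv] at hp; simp at hp
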